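/- Let E be a Banach lattice, u₀ ∈ E⁺, δ>0, and let D be a subset of the positive cone of E* such that ⟨u₀, x*⟩ ≥ δ for all x* ∈ D. If D is almost order bounded with respect to ρ_{u₀}, then there exists M ∈ ℕ such that every disjoint system in D contains at most M elements. -/

import Mathlib

open Filter

variable {E : Type*} [NormedAddCommGroup E] [Lattice E] [HasSolidNorm E] [IsOrderedAddMonoid E] [NormedSpace ℝ E]

/-- Riesz–Kantorovich formula for disjointness of two positive functionals:
`φ ⊓ χ = 0` iff `inf { φ(y) + χ(x-y) : 0 ≤ y ≤ x } = 0` for all `x ≥ 0`. -/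
def DualDisjointPos (φ χ : E →L[ℝ] ℝ) : Prop :=
  ∀ x : E, 0 ≤ x → ∀ ε : ℝ, 0 < ε → ∃ y : E, 0 ≤ y ∧ y ≤ x ∧ φ y + χ (x - y) < ε

/-- The Riesz seminorm `ρ_{u₀}(φ) = ⟨u₀, |φ|⟩`, computed via the Riesz–Kantorovich
formula `⟨u₀, |φ|⟩ = sup { φ(y) : |y| ≤ u₀ }`. -/
noncomputable def rhoEval (u₀ : E) (φ : E →L[ℝ] ℝ) : ℝ :=
  ⨆ y : {y : E // |y| ≤ u₀}, φ y

/-- `φ` lies in the order interval `[-χ, χ]` of the dual, i.e. `-χ ≤ φ ≤ χ`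
(with the dual order given by testing against the positive cone). -/
def MemDualInterval (φ χ : E →L[ℝ] ℝ) : Prop :=
  ∀ x : E, 0 ≤ x → -(χ x) ≤ φ x ∧ φ x ≤ χ x

/-- A positive functional is monotone. -/
lemma posFun_mono {φ : E →L[ℝ] ℝ} (hφ : ∀ a : E, 0 ≤ a → 0 ≤ φ a) {a b : E}
    (h : a ≤ b) : φ a ≤ φ b := by
  have := hφ (b - a) (by simpa using h)
  rw [map_sub] at this
  linarith

/-- The term `φ x` for `|x| ≤ u₀` is at most `rhoEval u₀ φ`. -/
lemma le_rhoEval {u₀ : E} (w : E →L[ℝ] ℝ) {x : E} (hx : |x| ≤ u₀) :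
    w x ≤ rhoEval u₀ w := by
  have hbdd : BddAbove (Set.range fun y : {y : E // |y| ≤ u₀} => w (y : E)) := by
    refine ⟨‖w‖ * ‖u₀‖, ?_⟩
    rintro r ⟨⟨y, hy⟩, rfl⟩
    have h1 : ‖y‖ ≤ ‖u₀‖ := by
      have hy' : |y| ≤ |u₀| := hy.trans (le_abs_self u₀)
      exact norm_le_norm_of_abs_le_abs hy'
    calc w y ≤ ‖w y‖ := le_abs_self _
      _ ≤ ‖w‖ * ‖y‖ := w.le_opNorm y
      _ ≤ ‖w‖ * ‖u₀‖ := by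
          exact mul_le_mul_of_nonneg_left h1 (norm_nonneg w)
  exact le_ciSup hbdd (⟨x, hx⟩ : {y : E // |y| ≤ u₀})

/-- A common lower approximant for finitely many elements below `x`. -/
lemma inf_approx {ψ : E →L[ℝ] ℝ} (hψ : ∀ a : E, 0 ≤ a → 0 ≤ ψ a) :
    ∀ (n : ℕ) {x : E}, 0 ≤ x → ∀ (y : Fin n → E), (∀ i, 0 ≤ y i) → (∀ i, y i ≤ x) →
    ∃ v : E, 0 ≤ v ∧ v ≤ x ∧ (∀ i, v ≤ y i) ∧ ψ (x - v) ≤ ∑ i, ψ (x - y i) := by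
  intro n
  induction n with
  | zero =>
    intro x hx y _ _
    exact ⟨x, hx, le_refl x, fun i => i.elim0, by simp⟩
  | succ n ih =>
    intro x hx y hy0 hyx
    obtain ⟨v, hv0, hvx, hvy, hvs⟩ := ih hx (y ∘ Fin.castSucc)
      (fun i => hy0 _) (fun i => hyx _)
    refine ⟨v ⊓ y (Fin.last n), le_inf hv0 (hy0 _), inf_le_left.trans hvx, ?_, ?_⟩
    · intro i
      rcases eq_or_ne i (Fin.last n) with rfl | hne
      · exact inf_le_right
      · obtain ⟨j, rfl⟩ := Fin.exists_castSucc_eq.mpr hne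
        exact inf_le_left.trans (hvy j)
    · have hsub : x - v ⊓ y (Fin.last n) = (x - v) ⊔ (x - y (Fin.last n)) := sub_inf _ _ _
      have h1 : (x - v) ⊔ (x - y (Fin.last n)) ≤ (x - v) + (x - y (Fin.last n)) := by
        refine sup_le ?_ ?_
        · exact le_add_of_nonneg_right (by simpa using hyx (Fin.last n))
        · exact le_add_of_nonneg_left (by simpa using hvx)
      calc ψ (x - v ⊓ y (Fin.last n)) ≤ ψ ((x - v) + (x - y (Fin.last n))) := by
            rw [hsub]; exact posFun_mono hψ h1
        _ = ψ (x - v) + ψ (x - y (Fin.last n)) := map_add _ _ _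
        _ ≤ (∑ i : Fin n, ψ (x - (y ∘ Fin.castSucc) i)) + ψ (x - y (Fin.last n)) := by
            linarith [hvs]
        _ = ∑ i : Fin (n + 1), ψ (x - y i) := by
            rw [Fin.sum_univ_castSucc]; rfl

/-- Decomposition of `x` for a pairwise disjoint system of positive functionals. -/
lemma disjoint_decomp :
    ∀ (n : ℕ) (φ : Fin n → E →L[ℝ] ℝ),
    (∀ i, ∀ a : E, 0 ≤ a → 0 ≤ φ i a) →
    (∀ i j, i ≠ j → DualDisjointPos (φ i) (φ j)) →
    ∀ (x : E), 0 ≤ x → ∀ η : ℝ, 0 < η →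
    ∃ xs : Fin n → E, (∀ i, 0 ≤ xs i) ∧ (∑ i, xs i) ≤ x ∧ ∀ i, φ i (x - xs i) < η := by
  intro n
  induction n with
  | zero =>
    intro φ _ _ x hx η hη
    exact ⟨fun i => i.elim0, fun i => i.elim0, by simpa using hx, fun i => i.elim0⟩
  | succ n ih =>
    intro φ hpos hdisj x hx η hη
    set ψ := φ (Fin.last n) with hψdef
    set η' : ℝ := η / (2 * (n + 1)) with hη'def
    have hη'pos : 0 < η' := by positivity
    have hη'lt : η' < η := by
      rw [hη'def]
      rw [div_lt_iff₀ (by positivity)]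
      nlinarith [hη.le]
    have h1 : ∀ i : Fin n, ∃ y : E, 0 ≤ y ∧ y ≤ x ∧ φ i.castSucc y + ψ (x - y) < η' :=
      fun i => hdisj i.castSucc (Fin.last n) (Fin.castSucc_lt_last i).ne x hx η' hη'pos
    choose y hy0 hyx hylt using h1
    obtain ⟨v, hv0, hvx, hvy, hvs⟩ := inf_approx (hpos (Fin.last n)) n hx y hy0 hyx
    have hφy : ∀ i : Fin n, φ i.castSucc (y i) < η' := by
      intro i
      have := hpos (Fin.last n) (x - y i) (by simpa using hyx i)
      have := hylt i
      linarith
    have hψy : ∀ i : Fin n, ψ (x - y i) < η' := by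
      intro i
      have := hpos i.castSucc (y i) (hy0 i)
      have := hylt i
      linarith
    have hψv : ψ (x - v) < η := by
      have hsum : ∑ i : Fin n, ψ (x - y i) ≤ (n : ℝ) * η' := by
        calc ∑ i : Fin n, ψ (x - y i) ≤ ∑ _i : Fin n, η' :=
              Finset.sum_le_sum fun i _ => (hψy i).le
          _ = (n : ℝ) * η' := by simp [mul_comm]
      have : (n : ℝ) * η' < η := by
        rw [hη'def, mul_div_assoc', div_lt_iff₀ (by positivity : (0:ℝ) < 2 * ((n:ℝ) + 1))]
        nlinarith [Nat.cast_nonneg (α := ℝ) n]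
      linarith [hvs]
    have hxv : (0 : E) ≤ x - v := by simpa using hvx
    obtain ⟨xs', hxs'0, hxs'sum, hxs'lt⟩ := ih (φ ∘ Fin.castSucc)
      (fun i => hpos _)
      (fun i j hij => hdisj _ _ (fun h => hij (Fin.castSucc_injective n h)))
      (x - v) hxv (η - η') (by linarith)
    refine ⟨Fin.snoc xs' v, ?_, ?_, ?_⟩
    · intro i
      rcases eq_or_ne i (Fin.last n) with rfl | hne
      · simpa [Fin.snoc_last] using hv0
      · obtain ⟨j, rfl⟩ := Fin.exists_castSucc_eq.mpr hne
        simpa [Fin.snoc_castSucc] using hxs'0 j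
    · rw [Fin.sum_univ_castSucc]
      simp only [Fin.snoc_castSucc, Fin.snoc_last]
      have : (∑ i : Fin n, xs' i) + v ≤ (x - v) + v := add_le_add_left hxs'sum v
      simpa using this
    · intro i
      rcases eq_or_ne i (Fin.last n) with rfl | hne
      · simpa [Fin.snoc_last] using hψv
      · obtain ⟨j, rfl⟩ := Fin.exists_castSucc_eq.mpr hne
        have hkey : x - (Fin.snoc xs' v : Fin (n+1) → E) j.castSucc = ((x - v) - xs' j) + v := by
          rw [Fin.snoc_castSucc]; abel
        have h2 : φ j.castSucc v < η' := by
          have hmono := posFun_mono (hpos j.castSucc) (hvy j)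
          exact lt_of_le_of_lt hmono (hφy j)
        have h3 := hxs'lt j
        rw [hkey, map_add]
        simp only [Function.comp] at h3
        linarith

/-- **Statement 14.** Let `E` be a Banach lattice, `u₀ ∈ E⁺`, `δ > 0`, and let
`D ⊆ (E*)⁺` with `⟨u₀, x*⟩ ≥ δ` for all `x* ∈ D`.  If `D` is almost order bounded with
respect to `ρ_{u₀}`, then there is `M ∈ ℕ` such that every disjoint system in `D` has at
most `M` elements. -/
theorem disjoint_systems_bounded_of_almost_orderBounded {E : Type*}
    [NormedAddCommGroup E] [Lattice E] [HasSolidNorm E] [IsOrderedAddMonoid E] [NormedSpace ℝ E] [CompleteSpace E]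
    (u₀ : E) (hu₀ : 0 ≤ u₀) (δ : ℝ) (hδ : 0 < δ) (D : Set (E →L[ℝ] ℝ))
    (hDpos : ∀ φ ∈ D, ∀ a : E, 0 ≤ a → 0 ≤ φ a)
    (hDlb : ∀ φ ∈ D, δ ≤ φ u₀)
    (haob : ∀ ε : ℝ, 0 < ε → ∃ y : E →L[ℝ] ℝ, (∀ a : E, 0 ≤ a → 0 ≤ y a) ∧
      ∀ φ ∈ D, ∃ z w : E →L[ℝ] ℝ,
        φ = z + w ∧ MemDualInterval z y ∧ rhoEval u₀ w ≤ ε) :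
    ∃ M : ℕ, ∀ (n : ℕ) (φ : Fin n → E →L[ℝ] ℝ), (∀ i, φ i ∈ D) →
      Function.Injective φ →
      (∀ i j : Fin n, i ≠ j → DualDisjointPos (φ i) (φ j)) → n ≤ M := by
  obtain ⟨g, hgpos, hg⟩ := haob (δ / 4) (by positivity)
  refine ⟨⌈2 * g u₀ / δ⌉₊, ?_⟩
  intro n φ hφD _ hdisj
  obtain ⟨xs, hxs0, hxsum, hxslt⟩ := disjoint_decomp n φ
    (fun i => hDpos _ (hφD i)) hdisj u₀ hu₀ (δ / 4) (by positivity)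
  -- each `g (xs i)` is at least `δ/2`
  have hkey : ∀ i, δ / 2 ≤ g (xs i) := by
    intro i
    obtain ⟨z, w, hzw, hzI, hwρ⟩ := hg (φ i) (hφD i)
    have hxi_le : xs i ≤ u₀ := by
      calc xs i ≤ ∑ j, xs j := Finset.single_le_sum (fun j _ => hxs0 j) (Finset.mem_univ i)
        _ ≤ u₀ := hxsum
    have habs : |xs i| ≤ u₀ := by rw [abs_of_nonneg (hxs0 i)]; exact hxi_le
    have hw : w (xs i) ≤ δ / 4 := (le_rhoEval w habs).trans hwρ
    have hφxi : 3 * δ / 4 < φ i (xs i) := by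
      have h1 : δ ≤ φ i u₀ := hDlb _ (hφD i)
      have h2 : φ i u₀ = φ i (xs i) + φ i (u₀ - xs i) := by
        rw [← map_add]; congr 1; abel
      have h3 := hxslt i
      linarith
    have hz : z (xs i) ≤ g (xs i) := (hzI (xs i) (hxs0 i)).2
    have hsum : φ i (xs i) = z (xs i) + w (xs i) := by rw [hzw]; rfl
    linarith
  have hsumg : (n : ℝ) * (δ / 2) ≤ g u₀ := by
    calc (n : ℝ) * (δ / 2) = ∑ _i : Fin n, δ / 2 := by simp [mul_comm]
      _ ≤ ∑ i, g (xs i) := Finset.sum_le_sum fun i _ => hkey i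
      _ = g (∑ i, xs i) := (map_sum g xs Finset.univ).symm
      _ ≤ g u₀ := posFun_mono hgpos hxsum
  have hn : (n : ℝ) ≤ 2 * g u₀ / δ := by
    rw [le_div_iff₀ hδ]
    linarith
  calc n = ⌈(n : ℝ)⌉₊ := by simp
    _ ≤ ⌈2 * g u₀ / δ⌉₊ := Nat.ceil_le_ceil hn
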